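/- Consider a population partitioned into C clusters, where cluster i contains n_i individuals all having utility u_i and healthy-probability q_i. Let t* be an optimal single pooled test, intersecting cluster i in a_i individuals. If B·a_i ≤ n_i for all clusters i, then the regime consisting of B pairwise disjoint copies of t* (same cluster composition) is an optimal testing regime with budget B, even among overlapping regimes. -/

import Mathlib

open Finset

/-- Probability of a health realization `ω` (true = healthy) under independent
healthy-probabilities `q`. -/
noncomputable def healthProb {n : ℕ} (q : Fin n → ℝ) (ω : Fin n → Bool) : ℝ :=
  ∏ i, if ω i then q i else 1 - q i

/-- Probability that individual `i` lies in at least one negative test of the regime `T`. -/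
noncomputable def inNegProb {n B : ℕ} (q : Fin n → ℝ) (T : Fin B → Finset (Fin n))
    (i : Fin n) : ℝ :=
  ∑ ω : Fin n → Bool,
    if ∃ j, i ∈ T j ∧ ∀ k ∈ T j, ω k = true then healthProb q ω else 0

/-- Expected welfare of a (possibly overlapping) testing regime `T`. -/
noncomputable def welfare {n B : ℕ} (q u : Fin n → ℝ) (T : Fin B → Finset (Fin n)) : ℝ :=
  ∑ i, u i * inNegProb q T i

/-- Stand-alone expected welfare of a single pooled test `t`. -/
noncomputable def testWelfare {n : ℕ} (q u : Fin n → ℝ) (t : Finset (Fin n)) : ℝ :=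
  (∏ i ∈ t, q i) * ∑ i ∈ t, u i

/-- Welfare of a non-overlapping testing regime, as a sum of stand-alone test welfares. -/
noncomputable def noWelfare {n B : ℕ} (q u : Fin n → ℝ) (T : Fin B → Finset (Fin n)) : ℝ :=
  ∑ j, testWelfare q u (T j)

/-- Probability that test `T j` is pivotal for individual `i`: `i ∈ T j`, test `T j` is
negative, and every earlier test containing `i` is positive. -/
noncomputable def pivotalProb {n B : ℕ} (q : Fin n → ℝ) (T : Fin B → Finset (Fin n))
    (i : Fin n) (j : Fin B) : ℝ :=
  ∑ ω : Fin n → Bool,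
    if i ∈ T j ∧ (∀ k ∈ T j, ω k = true) ∧
        (∀ j' : Fin B, j' < j → i ∈ T j' → ∃ k ∈ T j', ω k = false)
      then healthProb q ω else 0


-- helper: probability that a test is negative
lemma healthProb_nonneg {n : ℕ} (q : Fin n → ℝ) (hq : ∀ i, 0 ≤ q i ∧ q i ≤ 1)
    (ω : Fin n → Bool) : 0 ≤ healthProb q ω := by
  apply Finset.prod_nonneg
  intro i _
  rcases hq i with ⟨h1, h2⟩
  split <;> linarith

lemma sum_healthProb_neg {n : ℕ} (q : Fin n → ℝ) (t : Finset (Fin n)) :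
    (∑ ω : Fin n → Bool, if ∀ k ∈ t, ω k = true then healthProb q ω else 0)
      = ∏ k ∈ t, q k := by
  have key : ∀ ω : Fin n → Bool,
      (if ∀ k ∈ t, ω k = true then healthProb q ω else 0)
        = ∏ i, (if i ∈ t then (if ω i then q i else 0)
                else (if ω i then q i else 1 - q i)) := by
    intro ω
    by_cases h : ∀ k ∈ t, ω k = true
    · rw [if_pos h]
      unfold healthProb
      apply Finset.prod_congr rfl
      intro i _
      by_cases hi : i ∈ t
      · simp [hi, h i hi]
      · rw [if_neg hi]
    · rw [if_neg h]
      push_neg at h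
      obtain ⟨k, hk, hωk⟩ := h
      rw [eq_comm]
      apply Finset.prod_eq_zero (Finset.mem_univ k)
      simp [hk, hωk]
  rw [Finset.sum_congr rfl fun ω _ => key ω]
  have swap : (∑ ω : Fin n → Bool, ∏ i, (if i ∈ t then (if ω i then q i else 0)
                else (if ω i then q i else 1 - q i)))
      = ∏ i, ∑ b : Bool, (if i ∈ t then (if b then q i else 0)
                else (if b then q i else 1 - q i)) := by
    rw [Finset.prod_univ_sum]
    rw [← Fintype.piFinset_univ]
  rw [swap]
  have : ∀ i : Fin n, (∑ b : Bool, (if i ∈ t then (if b then q i else 0)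
                else (if b then q i else 1 - q i))) = if i ∈ t then q i else 1 := by
    intro i
    by_cases hi : i ∈ t <;> simp [hi] <;> ring
  rw [Finset.prod_congr rfl fun i _ => this i]
  rw [Finset.prod_ite_mem, Finset.univ_inter]

-- upper bound on inNegProb
lemma inNegProb_le {n B : ℕ} (q : Fin n → ℝ) (hq : ∀ i, 0 ≤ q i ∧ q i ≤ 1)
    (T : Fin B → Finset (Fin n)) (i : Fin n) :
    inNegProb q T i ≤ ∑ j, if i ∈ T j then ∏ k ∈ T j, q k else 0 := by
  have rhs : (∑ j, if i ∈ T j then ∏ k ∈ T j, q k else 0)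
      = ∑ ω : Fin n → Bool, ∑ j,
          (if i ∈ T j ∧ ∀ k ∈ T j, ω k = true then healthProb q ω else 0) := by
    rw [Finset.sum_comm]
    apply Finset.sum_congr rfl
    intro j _
    by_cases hij : i ∈ T j
    · simp only [hij, if_true, true_and]
      exact (sum_healthProb_neg q (T j)).symm
    · simp [hij]
  rw [rhs]
  unfold inNegProb
  apply Finset.sum_le_sum
  intro ω _
  by_cases h : ∃ j, i ∈ T j ∧ ∀ k ∈ T j, ω k = true
  · rw [if_pos h]
    obtain ⟨j, hj⟩ := h
    calc healthProb q ω
        = (if i ∈ T j ∧ ∀ k ∈ T j, ω k = true then healthProb q ω else 0) :=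
          (if_pos hj).symm
      _ ≤ _ := by
          apply Finset.single_le_sum (f := fun j =>
            (if i ∈ T j ∧ ∀ k ∈ T j, ω k = true then healthProb q ω else 0))
            (fun j _ => ?_) (Finset.mem_univ j)
          show 0 ≤ _
          split
          · exact healthProb_nonneg q hq ω
          · exact le_rfl
  · rw [if_neg h]
    apply Finset.sum_nonneg
    intro j _
    split
    · exact healthProb_nonneg q hq ω
    · exact le_rfl

-- equality for disjoint regimes
lemma inNegProb_disjoint {n B : ℕ} (q : Fin n → ℝ)
    (T : Fin B → Finset (Fin n)) (hdisj : ∀ j k, j ≠ k → Disjoint (T j) (T k)) (i : Fin n) :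
    inNegProb q T i = ∑ j, if i ∈ T j then ∏ k ∈ T j, q k else 0 := by
  have rhs : (∑ j, if i ∈ T j then ∏ k ∈ T j, q k else 0)
      = ∑ ω : Fin n → Bool, ∑ j,
          (if i ∈ T j ∧ ∀ k ∈ T j, ω k = true then healthProb q ω else 0) := by
    rw [Finset.sum_comm]
    apply Finset.sum_congr rfl
    intro j _
    by_cases hij : i ∈ T j
    · simp only [hij, if_true, true_and]
      exact (sum_healthProb_neg q (T j)).symm
    · simp [hij]
  rw [rhs]
  unfold inNegProb
  apply Finset.sum_congr rfl
  intro ω _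
  by_cases h : ∃ j, i ∈ T j ∧ ∀ k ∈ T j, ω k = true
  · obtain ⟨j, hj⟩ := h
    rw [if_pos ⟨j, hj⟩]
    rw [Finset.sum_eq_single j ?_ ?_]
    · exact (if_pos hj).symm
    · intro j' _ hj'
      rw [if_neg]
      rintro ⟨hij', -⟩
      exact (Finset.disjoint_left.mp (hdisj j' j hj') hij') hj.1
    · intro h'; exact absurd (Finset.mem_univ j) h'
  · rw [if_neg h, eq_comm]
    apply Finset.sum_eq_zero
    intro j _
    rw [if_neg]
    rintro ⟨h1, h2⟩
    exact h ⟨j, h1, h2⟩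

-- constructing disjoint parts
lemma exists_disjoint_parts {α : Type*} [DecidableEq α] (m a : ℕ) :
    ∀ S : Finset α, m * a ≤ S.card →
    ∃ P : Fin m → Finset α, (∀ j, P j ⊆ S ∧ (P j).card = a) ∧
      ∀ j j', j ≠ j' → Disjoint (P j) (P j') := by
  induction m with
  | zero =>
      intro S _
      exact ⟨fun j => ∅, fun j => j.elim0, fun j => j.elim0⟩
  | succ m ih =>
      intro S hS
      obtain ⟨t, hts, htcard⟩ := Finset.exists_subset_card_eq
        (le_trans (by nlinarith) hS : a ≤ S.card)
      have h2 : m * a ≤ (S \ t).card := by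
        rw [Finset.card_sdiff_of_subset hts, htcard]
        have : (m + 1) * a = m * a + a := by ring
        omega
      obtain ⟨P, hP1, hP2⟩ := ih (S \ t) h2
      refine ⟨Fin.cons t P, ?_, ?_⟩
      · intro j
        refine Fin.cases ?_ ?_ j
        · simp [hts, htcard]
        · intro j'
          simp only [Fin.cons_succ]
          exact ⟨(hP1 j').1.trans (Finset.sdiff_subset), (hP1 j').2⟩
      · intro j j' hne
        rcases Fin.eq_zero_or_eq_succ j with rfl | ⟨j₀, rfl⟩ <;>
          rcases Fin.eq_zero_or_eq_succ j' with rfl | ⟨j₁, rfl⟩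
        · exact absurd rfl hne
        · simp only [Fin.cons_zero, Fin.cons_succ]
          exact Finset.disjoint_of_subset_right (hP1 j₁).1 Finset.disjoint_sdiff
        · simp only [Fin.cons_zero, Fin.cons_succ]
          exact (Finset.disjoint_of_subset_right (hP1 j₀).1 Finset.disjoint_sdiff).symm
        · simp only [Fin.cons_succ]
          exact hP2 j₀ j₁ (fun e => hne (by rw [e]))

-- cluster-constant functions: products/sums determined by fiber cardinalities
lemma prod_eq_of_fibers {n C : ℕ} (c : Fin n → Fin C) (f : Fin n → ℝ)
    (hf : ∀ i i', c i = c i' → f i = f i') (s t : Finset (Fin n))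
    (h : ∀ k, (s.filter fun i => c i = k).card = (t.filter fun i => c i = k).card) :
    ∏ i ∈ s, f i = ∏ i ∈ t, f i := by
  rw [← Finset.prod_fiberwise_of_maps_to (fun i (_ : i ∈ s) => Finset.mem_univ (c i)) f,
      ← Finset.prod_fiberwise_of_maps_to (fun i (_ : i ∈ t) => Finset.mem_univ (c i)) f]
  apply Finset.prod_congr rfl
  intro k _
  rcases Finset.eq_empty_or_nonempty (s.filter fun i => c i = k) with he | ⟨i₀, hi₀⟩
  · have : (t.filter fun i => c i = k) = ∅ := by
      have := h k
      rw [he] at this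
      simp only [Finset.card_empty] at this
      exact Finset.card_eq_zero.mp this.symm
    rw [he, this]
  · have hc₀ : c i₀ = k := (Finset.mem_filter.mp hi₀).2
    rw [Finset.prod_eq_pow_card (b := f i₀) (fun x hx => hf x i₀ (by
        rw [(Finset.mem_filter.mp hx).2, hc₀])),
      Finset.prod_eq_pow_card (b := f i₀) (fun x hx => hf x i₀ (by
        rw [(Finset.mem_filter.mp hx).2, hc₀])), h k]

lemma sum_eq_of_fibers {n C : ℕ} (c : Fin n → Fin C) (f : Fin n → ℝ)
    (hf : ∀ i i', c i = c i' → f i = f i') (s t : Finset (Fin n))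
    (h : ∀ k, (s.filter fun i => c i = k).card = (t.filter fun i => c i = k).card) :
    ∑ i ∈ s, f i = ∑ i ∈ t, f i := by
  rw [← Finset.sum_fiberwise_of_maps_to (fun i (_ : i ∈ s) => Finset.mem_univ (c i)) f,
      ← Finset.sum_fiberwise_of_maps_to (fun i (_ : i ∈ t) => Finset.mem_univ (c i)) f]
  apply Finset.sum_congr rfl
  intro k _
  rcases Finset.eq_empty_or_nonempty (s.filter fun i => c i = k) with he | ⟨i₀, hi₀⟩
  · have : (t.filter fun i => c i = k) = ∅ := by
      have := h k
      rw [he] at this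
      simp only [Finset.card_empty] at this
      exact Finset.card_eq_zero.mp this.symm
    rw [he, this]
  · have hc₀ : c i₀ = k := (Finset.mem_filter.mp hi₀).2
    rw [Finset.sum_eq_card_nsmul (b := f i₀) (fun x hx => hf x i₀ (by
        rw [(Finset.mem_filter.mp hx).2, hc₀])),
      Finset.sum_eq_card_nsmul (b := f i₀) (fun x hx => hf x i₀ (by
        rw [(Finset.mem_filter.mp hx).2, hc₀])), h k]


/-- Clustered populations: if the population is partitioned into clusters with
cluster-wise constant utilities and healthy-probabilities, `tstar` is an optimal single
test, and each cluster is large enough to accommodate `B` copies of its intersection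
with `tstar`, then `B` pairwise disjoint copies of `tstar` (with the same cluster
composition) form an optimal budget-`B` regime, even among overlapping regimes. -/
theorem stmt18 {n C G B : ℕ} (q u : Fin n → ℝ) (c : Fin n → Fin C)
    (hq : ∀ i, 0 ≤ q i ∧ q i ≤ 1) (hu : ∀ i, 0 ≤ u i)
    (hcluster : ∀ i i' : Fin n, c i = c i' → q i = q i' ∧ u i = u i')
    (tstar : Finset (Fin n)) (hsize : tstar.card ≤ G)
    (hopt1 : ∀ t : Finset (Fin n), t.card ≤ G →
      testWelfare q u t ≤ testWelfare q u tstar)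
    (hroom : ∀ k : Fin C,
      B * (tstar.filter fun i => c i = k).card ≤
        (Finset.univ.filter fun i => c i = k).card) :
    ∃ T : Fin B → Finset (Fin n),
      (∀ j k, j ≠ k → Disjoint (T j) (T k)) ∧
      (∀ j, (T j).card ≤ G) ∧
      (∀ j, ∀ k : Fin C,
        ((T j).filter fun i => c i = k).card = (tstar.filter fun i => c i = k).card) ∧
      (∀ T' : Fin B → Finset (Fin n), (∀ j, (T' j).card ≤ G) →
        welfare q u T' ≤ welfare q u T) := by
  -- build disjoint parts within each cluster
  have parts : ∀ k : Fin C, ∃ P : Fin B → Finset (Fin n),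
      (∀ j, P j ⊆ (Finset.univ.filter fun i => c i = k) ∧
        (P j).card = (tstar.filter fun i => c i = k).card) ∧
      ∀ j j', j ≠ j' → Disjoint (P j) (P j') :=
    fun k => exists_disjoint_parts B ((tstar.filter fun i => c i = k).card)
      (Finset.univ.filter fun i => c i = k) (hroom k)
  choose P hP1 hP2 using parts
  set T : Fin B → Finset (Fin n) := fun j => Finset.univ.biUnion fun k => P k j with hT
  -- membership characterization
  have hmem : ∀ j (x : Fin n), x ∈ T j ↔ x ∈ P (c x) j := by
    intro j x
    simp only [hT, Finset.mem_biUnion, Finset.mem_univ, true_and]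
    constructor
    · rintro ⟨k, hk⟩
      have : c x = k := by
        have := (hP1 k j).1 hk
        exact (Finset.mem_filter.mp this).2
      rwa [this]
    · intro h; exact ⟨c x, h⟩
  -- fiber cards
  have hfiber : ∀ j k, ((T j).filter fun i => c i = k) = P k j := by
    intro j k
    ext x
    simp only [Finset.mem_filter]
    constructor
    · rintro ⟨hx, hcx⟩
      rw [hmem j x] at hx
      rwa [hcx] at hx
    · intro hx
      have hcx : c x = k := (Finset.mem_filter.mp ((hP1 k j).1 hx)).2
      exact ⟨(hmem j x).mpr (by rwa [hcx]), hcx⟩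
  have hfcard : ∀ j k, ((T j).filter fun i => c i = k).card
      = (tstar.filter fun i => c i = k).card := by
    intro j k; rw [hfiber j k]; exact (hP1 k j).2
  -- disjointness
  have hdisj : ∀ j k, j ≠ k → Disjoint (T j) (T k) := by
    intro j k hne
    rw [Finset.disjoint_left]
    intro x hxj hxk
    rw [hmem j x] at hxj
    rw [hmem k x] at hxk
    exact Finset.disjoint_left.mp (hP2 (c x) j k hne) hxj hxk
  -- cards
  have hcard : ∀ j, (T j).card = tstar.card := by
    intro j
    rw [Finset.card_eq_sum_card_fiberwise (fun x (_ : x ∈ T j) => Finset.mem_univ (c x)),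
        Finset.card_eq_sum_card_fiberwise (fun x (_ : x ∈ tstar) => Finset.mem_univ (c x))]
    exact Finset.sum_congr rfl fun k _ => hfcard j k
  -- each copy has the same welfare as tstar
  have hcopy : ∀ j, testWelfare q u (T j) = testWelfare q u tstar := by
    intro j
    unfold testWelfare
    rw [prod_eq_of_fibers c q (fun i i' h => (hcluster i i' h).1) (T j) tstar (hfcard j),
        sum_eq_of_fibers c u (fun i i' h => (hcluster i i' h).2) (T j) tstar (hfcard j)]
  have rearrange : ∀ S : Fin B → Finset (Fin n),
      (∑ i, u i * ∑ j, (if i ∈ S j then ∏ k ∈ S j, q k else 0))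
        = ∑ j, testWelfare q u (S j) := by
    intro S
    have h1 : ∀ i : Fin n, u i * (∑ j, (if i ∈ S j then ∏ k ∈ S j, q k else 0))
        = ∑ j, (if i ∈ S j then u i * ∏ k ∈ S j, q k else 0) := by
      intro i
      rw [Finset.mul_sum]
      apply Finset.sum_congr rfl
      intro j _
      split <;> simp
    rw [Finset.sum_congr rfl fun i _ => h1 i, Finset.sum_comm]
    apply Finset.sum_congr rfl
    intro j _
    rw [Finset.sum_ite_mem, Finset.univ_inter]
    unfold testWelfare
    rw [Finset.mul_sum]
    exact Finset.sum_congr rfl fun i _ => mul_comm (u i) _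
  refine ⟨T, hdisj, fun j => (hcard j).le.trans hsize, hfcard, ?_⟩
  intro T' hT'
  have hwT : welfare q u T = ∑ j, testWelfare q u (T j) := by
    unfold welfare
    rw [Finset.sum_congr rfl fun i (_ : i ∈ Finset.univ) => by
      rw [inNegProb_disjoint q T hdisj i]]
    exact rearrange T
  have hwT' : welfare q u T' ≤ ∑ j, testWelfare q u (T' j) := by
    rw [← rearrange T']
    unfold welfare
    apply Finset.sum_le_sum
    intro i _
    exact mul_le_mul_of_nonneg_left (inNegProb_le q hq T' i) (hu i)
  calc welfare q u T' ≤ ∑ j, testWelfare q u (T' j) := hwT'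
    _ ≤ ∑ j, testWelfare q u tstar := Finset.sum_le_sum fun j _ => hopt1 (T' j) (hT' j)
    _ = ∑ j, testWelfare q u (T j) := Finset.sum_congr rfl fun j _ => (hcopy j).symm
    _ = welfare q u T := hwT.symm
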